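/- For a prime p, a positive integer k, and a ∈ ℤ_p ∩ ℚ, the p-adic valuation of the rising factorial (a)_k = a(a+1)⋯(a+k-1) equals the sum over i ≥ 1 of ⌊(k + p^i - [-a]_{i-1} - 1)/p^i⌋, where [-a]_{i-1} denotes the truncation of the p-adic expansion of -a to its first i digits (i.e., the unique integer in [0, p^i) congruent to -a modulo p^i). -/

import Mathlib

/-- The rising factorial (Pochhammer symbol) `(a)_k = a(a+1)⋯(a+k-1)`. -/
def risingFact {R : Type*} [CommRing R] (a : R) (k : ℕ) : R :=
  ∏ i ∈ Finset.range k, (a + (i : R))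

theorem dvdIff (m r k : ℕ) (hr : r < m) : m ∣ k + (m - r) ↔ k % m = r := by
  constructor <;> intro h
  · obtain ⟨c, hc⟩ := h
    match c with
    | 0 => omega
    | c + 1 =>
      rw [Nat.mul_succ] at hc
      have hk : k = m * c + r := by omega
      rw [hk, Nat.mul_add_mod]
      exact Nat.mod_eq_of_lt hr
  · refine ⟨k / m + 1, ?_⟩
    rw [Nat.mul_succ]
    have := Nat.div_add_mod k m
    omega

theorem countLemma (m r : ℕ) (hm : 0 < m) (hr : r < m) (k : ℕ) :
    ((Finset.range k).filter (fun j => j % m = r)).card = (k + m - 1 - r) / m := by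
  induction k with
  | zero =>
      rw [Finset.range_zero, Finset.filter_empty, Finset.card_empty, eq_comm]
      exact Nat.div_eq_of_lt (by omega)
  | succ k ih =>
      rw [Finset.range_add_one, Finset.filter_insert]
      have h1 : k + 1 + m - 1 - r = (k + m - 1 - r) + 1 := by omega
      have h2 : (k + m - 1 - r) + 1 = k + (m - r) := by omega
      rw [h1, Nat.succ_div]
      by_cases hkr : k % m = r
      · rw [if_pos hkr, if_pos (h2 ▸ (dvdIff m r k hr).mpr hkr)]
        rw [Finset.card_insert_of_notMem (by simp), ih]
      · rw [if_neg hkr, if_neg (fun hd => hkr ((dvdIff m r k hr).mp (h2 ▸ hd)))]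
        simpa using ih

theorem floorLemma (m r k : ℕ) (hm : 0 < m) (hr : r < m) :
    ⌊((k : ℚ) + (m : ℚ) - (r : ℚ) - 1) / (m : ℚ)⌋ = ((k + m - 1 - r) / m : ℕ) := by
  have h1 : ((k : ℚ) + m - r - 1) = (((k + m - 1 - r : ℕ) : ℕ) : ℚ) := by
    push_cast [Nat.cast_sub (by omega : r ≤ k + m - 1), Nat.cast_sub (by omega : 1 ≤ k + m)]
    ring
  rw [h1, Rat.floor_natCast_div_natCast]
  exact (Int.natCast_ediv _ _).symm

theorem modIff (M s j : ℕ) (hs : s < M) : (M : ℤ) ∣ (s : ℤ) - (j : ℤ) ↔ j % M = s := by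
  rw [← Int.modEq_iff_dvd, Int.ModEq,
    Int.emod_eq_of_lt (a := (s : ℤ)) (by positivity) (by exact_mod_cast hs),
    ← Int.natCast_mod, Nat.cast_inj]

theorem normEq (p : ℕ) [hp : Fact p.Prime] (a : ℚ)
    (j : ℕ) (hj : a + (j : ℚ) ≠ 0) (b : ℤ_[p]) (hb : (b : ℚ_[p]) = ((-a : ℚ) : ℚ_[p])) :
    ‖b - (j : ℤ_[p])‖ = (p : ℝ) ^ (-(padicValRat p (a + j))) := by
  rw [PadicInt.norm_def]
  have hx : ((b - (j : ℤ_[p]) : ℤ_[p]) : ℚ_[p]) = -(((a + j : ℚ)) : ℚ_[p]) := by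
    push_cast [hb]
    ring
  rw [hx, norm_neg, Padic.eq_padicNorm, padicNorm.eq_zpow_of_nonzero hj]
  push_cast
  ring_nf

theorem keyIff (p : ℕ) [hp : Fact p.Prime] (a : ℚ) (ha : ‖((-a : ℚ) : ℚ_[p])‖ ≤ 1)
    (j n : ℕ) (hj : a + (j : ℚ) ≠ 0) :
    j % p ^ n = PadicInt.appr (⟨((-a : ℚ) : ℚ_[p]), ha⟩ : ℤ_[p]) n ↔
      (n : ℤ) ≤ padicValRat p (a + j) := by
  set b : ℤ_[p] := ⟨((-a : ℚ) : ℚ_[p]), ha⟩ with hb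
  have hp1 : (1 : ℝ) < p := by exact_mod_cast hp.out.one_lt
  have hxnorm : ‖b - (j : ℤ_[p])‖ = (p : ℝ) ^ (-(padicValRat p (a + j))) :=
    normEq p a j hj b rfl
  have hy : ‖b - ((b.appr n : ℕ) : ℤ_[p])‖ ≤ (p : ℝ) ^ (-n : ℤ) :=
    (PadicInt.norm_le_pow_iff_mem_span_pow _ n).mpr (PadicInt.appr_spec n b)
  have hcast : ((b.appr n : ℕ) : ℤ_[p]) - (j : ℤ_[p]) = (((b.appr n : ℤ) - (j : ℤ) : ℤ) : ℤ_[p]) := by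
    push_cast; ring
  have key : ‖b - (j : ℤ_[p])‖ ≤ (p : ℝ) ^ (-n : ℤ) ↔
      ‖((b.appr n : ℕ) : ℤ_[p]) - (j : ℤ_[p])‖ ≤ (p : ℝ) ^ (-n : ℤ) := by
    constructor <;> intro h
    · have e : ((b.appr n : ℕ) : ℤ_[p]) - (j : ℤ_[p]) =
        (b - j) + -(b - ((b.appr n : ℕ) : ℤ_[p])) := by ring
      rw [e]
      exact le_trans (PadicInt.nonarchimedean _ _) (by rw [norm_neg]; exact max_le h hy)
    · have e : b - (j : ℤ_[p]) =
        (((b.appr n : ℕ) : ℤ_[p]) - (j : ℤ_[p])) + (b - ((b.appr n : ℕ) : ℤ_[p])) := by ring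
      rw [e]
      exact le_trans (PadicInt.nonarchimedean _ _) (max_le h hy)
  rw [← modIff (p ^ n) (b.appr n) j (PadicInt.appr_lt b n), Nat.cast_pow,
    ← PadicInt.norm_int_le_pow_iff_dvd, ← hcast, ← key, hxnorm,
    zpow_le_zpow_iff_right₀ hp1, neg_le_neg_iff]

theorem valProd (p : ℕ) [Fact p.Prime] (a : ℚ) (k : ℕ)
    (h : ∀ j < k, a + (j : ℚ) ≠ 0) :
    padicValRat p (risingFact a k) = ∑ j ∈ Finset.range k, padicValRat p (a + j) := by
  induction k with
  | zero => simp [risingFact, padicValRat.one]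
  | succ k ih =>
      have hne : risingFact a k ≠ 0 := by
        unfold risingFact
        exact Finset.prod_ne_zero_iff.mpr fun j hj => h j (by
          simp only [Finset.mem_range] at hj; omega)
      have hstep : risingFact a (k + 1) = risingFact a k * (a + k) := by
        unfold risingFact
        rw [Finset.prod_range_succ]
      rw [hstep, padicValRat.mul hne (h k (by omega)), Finset.sum_range_succ,
        ih fun j hj => h j (by omega)]

theorem stmt0 (p : ℕ) [Fact p.Prime] (k : ℕ) (hk : 0 < k) (a : ℚ)
    (ha : ‖((-a : ℚ) : ℚ_[p])‖ ≤ 1)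
    (hnz : ∀ j < k, a + (j : ℚ) ≠ 0) :
    (padicValRat p (risingFact a k) : ℤ) =
      ∑' i : ℕ,
        ⌊((k : ℚ) + (p : ℚ) ^ (i + 1)
            - ((PadicInt.appr (⟨((-a : ℚ) : ℚ_[p]), ha⟩ : ℤ_[p]) (i + 1) : ℕ) : ℚ) - 1) / (p : ℚ) ^ (i + 1)⌋ := by
  have hp := (Fact.out : p.Prime)
  have hp1 : (1 : ℝ) < p := by exact_mod_cast hp.one_lt
  set b : ℤ_[p] := ⟨((-a : ℚ) : ℚ_[p]), ha⟩ with hb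
  set v : ℕ → ℤ := fun j => padicValRat p (a + j) with hv
  -- nonnegativity of valuations
  have hv0 : ∀ j < k, 0 ≤ v j := by
    intro j hj
    have h1 : ‖b - (j : ℤ_[p])‖ = (p : ℝ) ^ (-(v j)) := normEq p a j (hnz j hj) b rfl
    have h2 : (p : ℝ) ^ (-(v j)) ≤ (p : ℝ) ^ (0 : ℤ) := by
      rw [← h1, zpow_zero]
      exact PadicInt.norm_le_one _
    have := (zpow_le_zpow_iff_right₀ hp1).mp h2
    omega
  set N : ℕ := (Finset.range k).sup fun j => (v j).toNat with hN
  have hvN : ∀ j < k, v j ≤ (N : ℤ) := by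
    intro j hj
    calc v j ≤ ((v j).toNat : ℤ) := Int.self_le_toNat _
      _ ≤ (N : ℤ) := by
          exact_mod_cast Finset.le_sup (f := fun j => (v j).toNat) (Finset.mem_range.mpr hj)
  -- the summand equals a cardinality
  set f : ℕ → ℤ := fun i =>
    ⌊((k : ℚ) + (p : ℚ) ^ (i + 1) - ((PadicInt.appr b (i + 1) : ℕ) : ℚ) - 1) / (p : ℚ) ^ (i + 1)⌋
    with hf
  have hcard : ∀ i : ℕ,
      f i = (((Finset.range k).filter fun j => ((i : ℤ) + 1) ≤ v j).card : ℤ) := by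
    intro i
    have hm : 0 < p ^ (i + 1) := pow_pos hp.pos _
    have hr : b.appr (i + 1) < p ^ (i + 1) := PadicInt.appr_lt b (i + 1)
    have e1 : f i = ⌊((k : ℚ) + ((p ^ (i + 1) : ℕ) : ℚ) - ((b.appr (i + 1) : ℕ) : ℚ) - 1)
        / ((p ^ (i + 1) : ℕ) : ℚ)⌋ := by
      rw [hf]
      congr 1
      push_cast
      ring
    rw [e1, floorLemma _ _ _ hm hr, ← countLemma _ _ hm hr k]
    have hfc : (Finset.range k).filter (fun j => j % p ^ (i + 1) = b.appr (i + 1)) =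
        (Finset.range k).filter (fun j => ((i : ℤ) + 1) ≤ v j) := by
      apply Finset.filter_congr
      intro j hj
      have := keyIff p a ha j (i + 1) (hnz j (Finset.mem_range.mp hj))
      simpa only [Nat.cast_add, Nat.cast_one] using this
    rw [hfc]
  -- terms vanish beyond N
  have hzero : ∀ i ∉ Finset.range N, f i = 0 := by
    intro i hi
    rw [hcard i]
    simp only [Finset.mem_range, not_lt] at hi
    rw [Finset.card_eq_zero.mpr, Nat.cast_zero]
    rw [Finset.filter_eq_empty_iff]
    intro j hj h
    have h1 := hvN j (Finset.mem_range.mp hj)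
    have h2 : (N : ℤ) ≤ i := by exact_mod_cast hi
    omega
  rw [tsum_eq_sum hzero]
  -- swap the sums
  have hrw : ∀ i ∈ Finset.range N, f i = ∑ j ∈ Finset.range k,
      (if ((i : ℤ) + 1) ≤ v j then (1 : ℤ) else 0) := by
    intro i _
    rw [hcard i, Finset.card_filter]
    push_cast
    rfl
  rw [Finset.sum_congr rfl hrw, Finset.sum_comm]
  have hinner : ∀ j ∈ Finset.range k,
      (∑ i ∈ Finset.range N, if ((i : ℤ) + 1) ≤ v j then (1 : ℤ) else 0) = v j := by
    intro j hj
    have hj' := Finset.mem_range.mp hj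
    have h0 := hv0 j hj'
    have hN' := hvN j hj'
    have hcond : ∀ i : ℕ, (((i : ℤ) + 1) ≤ v j) ↔ i < (v j).toNat := by
      intro i
      omega
    simp only [hcond]
    rw [Finset.sum_boole]
    have hfe : (Finset.range N).filter (fun i => i < (v j).toNat) = Finset.range (v j).toNat := by
      ext i
      simp only [Finset.mem_filter, Finset.mem_range]
      omega
    rw [hfe, Finset.card_range, Int.toNat_of_nonneg h0]
  rw [Finset.sum_congr rfl hinner, valProd p a k hnz]
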